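/- Let (X,D) be a metric space, f : X → X a map with L_D(f) < ∞, and k ≥ 1 an integer such that L := L_D(f^k) satisfies 1 ≤ L < ∞; set w := L^{1/k}. Define d_k(x,y) := max_{0 ≤ j ≤ k−1} D(f^j x, f^j y)/w^j. Then: (a) d_k is a metric on X; (b) d_k is bi-Lipschitz equivalent to D, with D(x,y) ≤ d_k(x,y) ≤ M·D(x,y) for M := max_{0≤j≤k−1} L_D(f^j)/w^j < ∞; and (c) f is Lipschitz with respect to d_k with L_{d_k}(f) ≤ L_D(f^k)^{1/k}. -/

import Mathlib

open scoped ENNReal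

/-- The (possibly infinite) Lipschitz constant `L_D(f) = sup_{x ≠ y} D(f x, f y)/D(x,y)`
of a self-map of a metric space. -/
noncomputable def lipConst {X : Type*} [MetricSpace X] (f : X → X) : ℝ≥0∞ :=
  ⨆ (x : X) (y : X) (_ : x ≠ y), ENNReal.ofReal (dist (f x) (f y) / dist x y)

lemma dist_le_lipConst {X : Type*} [MetricSpace X] (f : X → X) (hf : lipConst f ≠ ⊤)
    (x y : X) : dist (f x) (f y) ≤ (lipConst f).toReal * dist x y := by
  rcases eq_or_ne x y with h | h
  · simp [h]
  · have hd : 0 < dist x y := dist_pos.mpr h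
    have h1 : ENNReal.ofReal (dist (f x) (f y) / dist x y) ≤ lipConst f :=
      le_iSup_of_le x (le_iSup_of_le y (le_iSup_of_le h le_rfl))
    have h2 : dist (f x) (f y) / dist x y ≤ (lipConst f).toReal := by
      have := ENNReal.toReal_mono hf h1
      rwa [ENNReal.toReal_ofReal (by positivity)] at this
    calc dist (f x) (f y) = dist (f x) (f y) / dist x y * dist x y := by field_simp
      _ ≤ _ := mul_le_mul_of_nonneg_right h2 hd.le

lemma lipConst_le {X : Type*} [MetricSpace X] (f : X → X) {C : ℝ}
    (h : ∀ x y, dist (f x) (f y) ≤ C * dist x y) :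
    lipConst f ≤ ENNReal.ofReal C := by
  refine iSup_le fun x => iSup_le fun y => iSup_le fun hxy => ?_
  apply ENNReal.ofReal_le_ofReal
  rw [div_le_iff₀ (dist_pos.mpr hxy)]
  exact h x y

lemma lipConst_iterate_ne_top {X : Type*} [MetricSpace X] (f : X → X)
    (hf : lipConst f ≠ ⊤) (j : ℕ) : lipConst (f^[j]) ≠ ⊤ := by
  induction j with
  | zero =>
      have : lipConst (f^[0]) ≤ ENNReal.ofReal 1 :=
        lipConst_le _ (fun x y => by simp)
      exact ne_top_of_le_ne_top ENNReal.ofReal_ne_top this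
  | succ n ih =>
      have hCf : 0 ≤ (lipConst f).toReal := ENNReal.toReal_nonneg
      have hb : ∀ x y : X, dist (f^[n+1] x) (f^[n+1] y) ≤
          ((lipConst f).toReal * (lipConst (f^[n])).toReal) * dist x y := by
        intro x y
        rw [Function.iterate_succ_apply', Function.iterate_succ_apply']
        calc dist (f (f^[n] x)) (f (f^[n] y))
            ≤ (lipConst f).toReal * dist (f^[n] x) (f^[n] y) :=
              dist_le_lipConst f hf _ _
          _ ≤ (lipConst f).toReal * ((lipConst (f^[n])).toReal * dist x y) :=
              mul_le_mul_of_nonneg_left (dist_le_lipConst _ ih _ _) hCf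
          _ = _ := by ring
      exact ne_top_of_le_ne_top ENNReal.ofReal_ne_top (lipConst_le _ hb)

/-- given `f` with `L_D(f) < ∞` and `k ≥ 1` with `L := L_D(f^k)`
satisfying `1 ≤ L < ∞`, put `w := L^{1/k}` and
`d_k(x,y) := max_{0 ≤ j ≤ k-1} D(f^j x, f^j y)/w^j`. Then (a) `d_k` is a metric,
(b) `D ≤ d_k ≤ M·D` with `M = max_{0 ≤ j ≤ k-1} L_D(f^j)/w^j < ∞`, and
(c) `f` is `w = L_D(f^k)^{1/k}`-Lipschitz for `d_k`. -/
theorem adapted_metric_for_iterates {X : Type*} [MetricSpace X] (f : X → X)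
    (hf : lipConst f < ⊤) (k : ℕ) (hk : 1 ≤ k)
    (hfin : lipConst (f^[k]) < ⊤) (hL : 1 ≤ (lipConst (f^[k])).toReal) :
    ∀ w : ℝ, w = (lipConst (f^[k])).toReal ^ ((1 : ℝ) / k) →
    ∀ dk : X → X → ℝ,
      (dk = fun x y => (Finset.range k).sup'
          (Finset.nonempty_range_iff.mpr (Nat.one_le_iff_ne_zero.mp hk))
          fun j => dist (f^[j] x) (f^[j] y) / w ^ j) →
      -- (a) `d_k` is a metric on `X`
      ((∀ x y, dk x y = 0 ↔ x = y) ∧ (∀ x y, dk x y = dk y x) ∧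
        (∀ x y z, dk x z ≤ dk x y + dk y z)) ∧
      -- (b) `d_k` is bi-Lipschitz equivalent to `D`, with finite `M`
      ((∀ j, j ≤ k - 1 → lipConst (f^[j]) < ⊤) ∧
        ∀ x y, dist x y ≤ dk x y ∧
          dk x y ≤ ((Finset.range k).sup'
              (Finset.nonempty_range_iff.mpr (Nat.one_le_iff_ne_zero.mp hk))
              fun j => (lipConst (f^[j])).toReal / w ^ j) * dist x y) ∧
      -- (c) `f` is Lipschitz for `d_k` with constant `L_D(f^k)^{1/k}`
      (∀ x y, dk (f x) (f y) ≤ w * dk x y) := by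
  intro w hw dk hdk
  subst hdk
  set L : ℝ := (lipConst (f^[k])).toReal with hLdef
  have hk0 : (k : ℝ) ≠ 0 := Nat.cast_ne_zero.mpr (Nat.one_le_iff_ne_zero.mp hk)
  have hw1 : 1 ≤ w := by
    rw [hw]
    exact Real.one_le_rpow hL (by positivity)
  have hw0 : 0 < w := lt_of_lt_of_le one_pos hw1
  have hwk : w ^ k = L := by
    rw [hw, ← Real.rpow_natCast (L ^ ((1:ℝ)/k)) k, ← Real.rpow_mul (by linarith),
      one_div_mul_cancel hk0, Real.rpow_one]
  have hne := Finset.nonempty_range_iff.mpr (Nat.one_le_iff_ne_zero.mp hk)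
  have h0mem : 0 ∈ Finset.range k := Finset.mem_range.mpr hk
  -- dist x y ≤ dk x y
  have hlow : ∀ x y : X, dist x y ≤ (Finset.range k).sup' hne
      (fun j => dist (f^[j] x) (f^[j] y) / w ^ j) := by
    intro x y
    have := Finset.le_sup' (f := fun j => dist (f^[j] x) (f^[j] y) / w ^ j) h0mem
    simpa only [Function.iterate_zero_apply, pow_zero, div_one] using this
  have hdknn : ∀ x y : X, 0 ≤ (Finset.range k).sup' hne (fun j => dist (f^[j] x) (f^[j] y) / w ^ j) := fun x y => le_trans dist_nonneg (hlow x y)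
  refine ⟨⟨?_, ?_, ?_⟩, ⟨?_, ?_⟩, ?_⟩
  · -- dk x y = 0 ↔ x = y
    intro x y
    constructor
    · intro h
      exact dist_le_zero.mp ((hlow x y).trans_eq h)
    · intro h
      subst h
      exact le_antisymm (Finset.sup'_le _ _ fun j _ => by simp) (hdknn x x)
  · intro x y
    simp [dist_comm]
  · -- triangle
    intro x y z
    refine Finset.sup'_le _ _ fun j hj => ?_
    have h1 : dist (f^[j] x) (f^[j] z) / w ^ j ≤
        dist (f^[j] x) (f^[j] y) / w ^ j + dist (f^[j] y) (f^[j] z) / w ^ j := by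
      rw [← add_div]
      exact div_le_div_of_nonneg_right (dist_triangle _ _ _) (pow_pos hw0 j).le |>.trans le_rfl
    refine h1.trans (add_le_add ?_ ?_)
    · have := Finset.le_sup' (f := fun j => dist (f^[j] x) (f^[j] y) / w ^ j) hj
      exact this
    · have := Finset.le_sup' (f := fun j => dist (f^[j] y) (f^[j] z) / w ^ j) hj
      exact this
  · -- finiteness of iterate lip constants
    intro j _
    exact lt_top_iff_ne_top.mpr (lipConst_iterate_ne_top f hf.ne j)
  · -- bi-Lipschitz bounds
    intro x y
    refine ⟨hlow x y, ?_⟩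
    refine Finset.sup'_le _ _ fun j hj => ?_
    have h1 : dist (f^[j] x) (f^[j] y) / w ^ j ≤
        (lipConst (f^[j])).toReal / w ^ j * dist x y := by
      rw [div_mul_eq_mul_div]
      exact div_le_div_of_nonneg_right
        (dist_le_lipConst _ (lipConst_iterate_ne_top f hf.ne j) x y) (pow_pos hw0 j).le
    refine h1.trans (mul_le_mul_of_nonneg_right ?_ dist_nonneg)
    exact Finset.le_sup' (f := fun j => (lipConst (f^[j])).toReal / w ^ j) hj
  · -- f is w-Lipschitz for dk
    intro x y
    refine Finset.sup'_le _ _ fun j hj => ?_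
    rw [← Function.iterate_succ_apply, ← Function.iterate_succ_apply]
    rcases lt_or_eq_of_le (Nat.succ_le_of_lt (Finset.mem_range.mp hj)) with hjk | hjk
    · -- j+1 < k : bound by w * term_{j+1}
      have hmem : j + 1 ∈ Finset.range k := Finset.mem_range.mpr hjk
      have : dist (f^[j+1] x) (f^[j+1] y) / w ^ j =
          w * (dist (f^[j+1] x) (f^[j+1] y) / w ^ (j+1)) := by
        rw [pow_succ]
        field_simp
      rw [this]
      refine mul_le_mul_of_nonneg_left ?_ hw0.le
      have := Finset.le_sup' (f := fun j => dist (f^[j] x) (f^[j] y) / w ^ j) hmem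
      exact this
    · -- j+1 = k : use the k-th iterate bound
      have hjk' : j + 1 = k := hjk
      have hdist : dist (f^[j+1] x) (f^[j+1] y) ≤ L * dist x y := by
        rw [hjk']
        exact dist_le_lipConst _ hfin.ne x y
      have hstep : dist (f^[j+1] x) (f^[j+1] y) / w ^ j ≤ w * dist x y := by
        rw [div_le_iff₀ (pow_pos hw0 j)]
        refine hdist.trans ?_
        have hLw : L = w * w ^ j := by
          rw [← hwk, ← hjk', pow_succ]
          ring
        rw [hLw]
        rcases le_or_gt (dist x y) 0 with hd | hd
        · have : dist x y = 0 := le_antisymm hd dist_nonneg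
          simp [this]
        · nlinarith [pow_pos hw0 j]
      refine hstep.trans (mul_le_mul_of_nonneg_left ?_ hw0.le)
      exact hlow x y
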